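/- Let λ* ∈ ℂ, δ > 0, m ≥ 0 an integer, c ∈ ℂ with c ≠ 0, and C, α > 0. For each integer N ≥ 1 let D_N : B_δ(λ*) → ℂ be analytic and satisfy |D_N(λ) − c(λ − λ*)^m| ≤ C(|λ − λ*|^{m+1} + e^{−αN}) for all λ ∈ B_δ(λ*). Then there exist δ* ∈ (0, δ), N* ≥ 1, β > 0, and C′ > 0 such that for every N ≥ N*, the function D_N has exactly m zeros in B_{δ*}(λ*), counted with multiplicity, and every zero λ of D_N in B_{δ*}(λ*) satisfies |λ − λ*| ≤ C′ e^{−βN}. -/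

import Mathlib

open Metric Set


private lemma exp_decay_lt {a b d : ℝ} (ha : 0 < a) (hb : 0 < b) (hd : 0 < d) :
    ∃ M : ℕ, ∀ N : ℕ, M ≤ N → a * Real.exp (-b * N) < d := by
  obtain ⟨M, hM⟩ := exists_nat_gt (Real.log (a / d) / b)
  refine ⟨M, fun N hN => ?_⟩
  have hN' : Real.log (a / d) / b < (N : ℝ) := lt_of_lt_of_le hM (Nat.cast_le.2 hN)
  have h1 : Real.log (a / d) < (N : ℝ) * b := (div_lt_iff₀ hb).1 hN'
  have h2 : a / d < Real.exp (b * N) := by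
    calc a / d = Real.exp (Real.log (a / d)) := (Real.exp_log (by positivity)).symm
    _ < Real.exp (b * N) := Real.exp_lt_exp.2 (by linarith)
  have h3 : a < Real.exp (b * N) * d := (div_lt_iff₀ hd).1 h2
  have h4 : Real.exp (-b * N) * Real.exp (b * N) = 1 := by
    rw [← Real.exp_add]; ring_nf; exact Real.exp_zero
  nlinarith [mul_lt_mul_of_pos_right h3 (Real.exp_pos (-b * (N : ℝ))), Real.exp_pos (b * (N : ℝ)),
    Real.exp_pos (-b * (N : ℝ)), hd.le]

private lemma max_modulus_ball {g : ℂ → ℂ} {z₀ : ℂ} {s K : ℝ} (hs : 0 < s)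
    (hg : ∀ z ∈ Metric.closedBall z₀ s, AnalyticAt ℂ g z)
    (hbd : ∀ z ∈ Metric.sphere z₀ s, ‖g z‖ ≤ K) :
    ∀ z ∈ Metric.closedBall z₀ s, ‖g z‖ ≤ K := by
  intro z hz
  have hdo : DifferentiableOn ℂ g (closure (Metric.ball z₀ s)) := by
    rw [closure_ball z₀ hs.ne']
    exact fun w hw => ((hg w hw).differentiableAt).differentiableWithinAt
  refine Complex.norm_le_of_forall_mem_frontier_norm_le isBounded_ball hdo.diffContOnCl ?_ ?_
  · intro w hw; rw [frontier_ball z₀ hs.ne'] at hw; exact hbd w hw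
  · rw [closure_ball z₀ hs.ne']; exact hz

private lemma exists_zero_of_min_modulus {f : ℂ → ℂ} {z₀ : ℂ} {r e : ℝ}
    (hr : 0 < r) (he : 0 < e)
    (hf : ∀ z ∈ Metric.closedBall z₀ r, AnalyticAt ℂ f z)
    (hbd : ∀ z ∈ Metric.sphere z₀ r, e ≤ ‖f z‖)
    (hcen : ‖f z₀‖ < e) :
    ∃ ρ ∈ Metric.closedBall z₀ r, f ρ = 0 := by
  by_contra hno
  push_neg at hno
  have hdo : DifferentiableOn ℂ (fun z => (f z)⁻¹) (closure (Metric.ball z₀ r)) := by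
    rw [closure_ball z₀ hr.ne']
    exact fun w hw => (((hf w hw).inv (hno w hw)).differentiableAt).differentiableWithinAt
  have hkey : ‖(f z₀)⁻¹‖ ≤ e⁻¹ := by
    refine Complex.norm_le_of_forall_mem_frontier_norm_le isBounded_ball hdo.diffContOnCl ?_ ?_
    · intro w hw
      rw [frontier_ball z₀ hr.ne'] at hw
      rw [norm_inv]
      exact inv_anti₀ he (hbd w hw)
    · rw [closure_ball z₀ hr.ne']; exact mem_closedBall_self hr.le
  have hfz : f z₀ ≠ 0 := hno z₀ (mem_closedBall_self hr.le)
  have hpos : 0 < ‖f z₀‖ := norm_pos_iff.2 hfz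
  rw [norm_inv] at hkey
  have : e ≤ ‖f z₀‖ := (inv_le_inv₀ hpos he).1 hkey
  linarith

set_option maxHeartbeats 2000000 in
private lemma key_lemma (m : ℕ) : ∀ (lstar : ℂ) (δ : ℝ), 0 < δ → ∀ (c : ℂ), c ≠ 0 →
    ∀ (C α : ℝ), 0 < C → 0 < α → ∀ (N₀ : ℕ) (D : ℕ → ℂ → ℂ),
    (∀ N, N₀ ≤ N → ∀ l ∈ Metric.ball lstar δ, AnalyticAt ℂ (D N) l) →
    (∀ N, N₀ ≤ N → ∀ l ∈ Metric.ball lstar δ,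
        ‖D N l - c * (l - lstar) ^ m‖ ≤ C * (‖l - lstar‖ ^ (m + 1) + Real.exp (-α * N))) →
    ∃ δstar : ℝ, 0 < δstar ∧ δstar ≤ δ ∧ ∃ Nstar : ℕ, N₀ ≤ Nstar ∧
      ∃ β : ℝ, 0 < β ∧ ∃ C' : ℝ, 0 < C' ∧
      ∀ N, Nstar ≤ N →
        C' * Real.exp (-β * N) < δstar ∧
        ∃ ρ : Fin m → ℂ, (∀ i, ‖ρ i - lstar‖ ≤ C' * Real.exp (-β * N)) ∧
        ∃ h : ℂ → ℂ, (∀ l ∈ Metric.ball lstar δ, AnalyticAt ℂ h l) ∧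
          (∀ l ∈ Metric.ball lstar δstar, h l ≠ 0) ∧
          ∀ l : ℂ, D N l = (∏ i, (l - ρ i)) * h l := by
  induction m with
  | zero =>
    intro lstar δ hδ c hc C α hC hα N₀ D hDa hDb
    have hcn : (0 : ℝ) < ‖c‖ := norm_pos_iff.2 hc
    set δstar : ℝ := min δ (‖c‖ / (4 * C)) with hδstar_def
    have hδstar : 0 < δstar := lt_min hδ (by positivity)
    obtain ⟨M₁, hM₁⟩ := exp_decay_lt hC hα (show (0:ℝ) < ‖c‖ / 4 by positivity)
    obtain ⟨M₂, hM₂⟩ := exp_decay_lt hC hα hδstar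
    refine ⟨δstar, hδstar, min_le_left _ _, max N₀ (max M₁ M₂), le_max_left _ _,
      α, hα, C, hC, fun N hN => ?_⟩
    have hN₀ : N₀ ≤ N := le_trans (le_max_left _ _) hN
    have hNM₁ : M₁ ≤ N := le_trans (le_trans (le_max_left _ _) (le_max_right N₀ _)) hN
    have hNM₂ : M₂ ≤ N := le_trans (le_trans (le_max_right _ _) (le_max_right N₀ _)) hN
    refine ⟨hM₂ N hNM₂, Fin.elim0, fun i => i.elim0, D N, hDa N hN₀, ?_, fun l => by simp⟩
    intro l hl hzero
    have hl' : l ∈ Metric.ball lstar δ := ball_subset_ball (min_le_left _ _) hl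
    have hb := hDb N hN₀ l hl'
    rw [hzero] at hb
    simp only [pow_zero, mul_one, zero_sub, norm_neg, pow_one] at hb
    have hdist : ‖l - lstar‖ < δstar := by
      rw [← dist_eq_norm]; exact mem_ball.1 hl
    have h1 : C * ‖l - lstar‖ ≤ C * (‖c‖ / (4 * C)) :=
      mul_le_mul_of_nonneg_left (le_trans hdist.le (min_le_right _ _)) hC.le
    have h2 : C * (‖c‖ / (4 * C)) = ‖c‖ / 4 := by field_simp
    have h3 : C * Real.exp (-α * N) < ‖c‖ / 4 := hM₁ N hNM₁
    have hb' : C * (‖l - lstar‖ ^ (0 + 1) + Real.exp (-α * N))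
        = C * ‖l - lstar‖ + C * Real.exp (-α * N) := by ring
    linarith [hb]
  | succ m ih =>
    intro lstar δ hδ c hc C α hC hα N₀ D hDa hDb
    have hcn : (0 : ℝ) < ‖c‖ := norm_pos_iff.2 hc
    have hk0 : (m + 1 : ℕ) ≠ 0 := Nat.succ_ne_zero m
    set β₀ : ℝ := α / (↑(m + 1 : ℕ) : ℝ) with hβ₀_def
    have hβ₀ : 0 < β₀ := by
      rw [hβ₀_def]; positivity
    set α₁ : ℝ := β₀ / 2 with hα₁_def
    have hα₁ : 0 < α₁ := by rw [hα₁_def]; positivity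
    set C₀ : ℝ := (4 * C / ‖c‖) ^ ((↑(m + 1 : ℕ) : ℝ))⁻¹ with hC₀_def
    have hC₀pos : 0 < C₀ := by
      rw [hC₀_def]; exact Real.rpow_pos_of_pos (by positivity) _
    have hC₀pow : C₀ ^ (m + 1) = 4 * C / ‖c‖ := by
      rw [hC₀_def]; exact Real.rpow_inv_natCast_pow (by positivity) hk0
    have hepow : ∀ N : ℕ, (Real.exp (-β₀ * N)) ^ (m + 1) = Real.exp (-α * N) := by
      intro N
      rw [← Real.exp_nat_mul]
      congr 1
      rw [hβ₀_def]
      have : ((m:ℝ) + 1) ≠ 0 := by positivity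
      push_cast
      field_simp
    have hrpow : ∀ N : ℕ, (C₀ * Real.exp (-β₀ * N)) ^ (m + 1)
        = (4 * C / ‖c‖) * Real.exp (-α * N) := by
      intro N; rw [mul_pow, hC₀pow, hepow]
    obtain ⟨Ma, hMa⟩ := exp_decay_lt hC₀pos hβ₀ (half_pos hδ)
    obtain ⟨Mb, hMb⟩ := exp_decay_lt hC₀pos hβ₀ (show (0:ℝ) < ‖c‖ / (4 * C) by positivity)
    obtain ⟨Mc, hMc⟩ := exp_decay_lt hC₀pos hα₁ one_half_pos
    obtain ⟨Md, hMd⟩ := exp_decay_lt one_pos hα₁ (half_pos hδ)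
    set N₁ : ℕ := max (max N₀ (max Ma Mb)) (max Mc Md) with hN₁_def
    have hN₀N₁ : N₀ ≤ N₁ := by rw [hN₁_def]; omega
    have hNa : ∀ N, N₁ ≤ N → Ma ≤ N := by intro N hN; rw [hN₁_def] at hN; omega
    have hNb : ∀ N, N₁ ≤ N → Mb ≤ N := by intro N hN; rw [hN₁_def] at hN; omega
    have hNc : ∀ N, N₁ ≤ N → Mc ≤ N := by intro N hN; rw [hN₁_def] at hN; omega
    have hNd : ∀ N, N₁ ≤ N → Md ≤ N := by intro N hN; rw [hN₁_def] at hN; omega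
    have hN₀' : ∀ N, N₁ ≤ N → N₀ ≤ N := by intro N hN; rw [hN₁_def] at hN; omega
    -- existence of a zero
    have hzero : ∀ N, N₁ ≤ N →
        ∃ ρ ∈ Metric.closedBall lstar (C₀ * Real.exp (-β₀ * N)), D N ρ = 0 := by
      intro N hN
      have hrpos : 0 < C₀ * Real.exp (-β₀ * N) := by positivity
      have hrδ : C₀ * Real.exp (-β₀ * N) < δ / 2 := hMa N (hNa N hN)
      have hrc : C₀ * Real.exp (-β₀ * N) < ‖c‖ / (4 * C) := hMb N (hNb N hN)
      have hsub : Metric.closedBall lstar (C₀ * Real.exp (-β₀ * N)) ⊆ Metric.ball lstar δ :=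
        closedBall_subset_ball (by linarith)
      have hPpos : 0 < (C₀ * Real.exp (-β₀ * N)) ^ (m + 1) := by positivity
      have hPE : ‖c‖ * (C₀ * Real.exp (-β₀ * N)) ^ (m + 1) = 4 * C * Real.exp (-α * N) := by
        rw [hrpow N]
        field_simp
      refine exists_zero_of_min_modulus hrpos
        (show (0:ℝ) < ‖c‖ * (C₀ * Real.exp (-β₀ * N)) ^ (m + 1) / 2 by positivity)
        (fun z hz => hDa N (hN₀' N hN) z (hsub hz)) ?_ ?_
      · intro z hz
        have hzb : z ∈ Metric.ball lstar δ := hsub (sphere_subset_closedBall hz)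
        have hzn : ‖z - lstar‖ = C₀ * Real.exp (-β₀ * N) := by
          rw [← dist_eq_norm]; exact mem_sphere.1 hz
        have hb := hDb N (hN₀' N hN) z hzb
        rw [hzn] at hb
        have htr : ‖c‖ * (C₀ * Real.exp (-β₀ * N)) ^ (m + 1)
            ≤ ‖D N z‖ + ‖D N z - c * (z - lstar) ^ (m + 1)‖ := by
          have h5 := norm_sub_le (D N z) (D N z - c * (z - lstar) ^ (m + 1))
          have h6 : D N z - (D N z - c * (z - lstar) ^ (m + 1))
              = c * (z - lstar) ^ (m + 1) := by ring
          rw [h6] at h5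
          calc ‖c‖ * (C₀ * Real.exp (-β₀ * N)) ^ (m + 1)
              = ‖c * (z - lstar) ^ (m + 1)‖ := by rw [norm_mul, norm_pow, hzn]
            _ ≤ _ := h5
        have hexp : (C₀ * Real.exp (-β₀ * N)) ^ (m + 1 + 1)
            = (C₀ * Real.exp (-β₀ * N)) * (C₀ * Real.exp (-β₀ * N)) ^ (m + 1) := by
          rw [pow_succ]; ring
        have hCc : C * (‖c‖ / (4 * C)) = ‖c‖ / 4 := by field_simp
        have hCr : C * (C₀ * Real.exp (-β₀ * N)) ≤ ‖c‖ / 4 := by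
          nlinarith [mul_lt_mul_of_pos_left hrc hC]
        have hb' : C * ((C₀ * Real.exp (-β₀ * N)) ^ (m + 1 + 1) + Real.exp (-α * N))
            = C * (C₀ * Real.exp (-β₀ * N)) * (C₀ * Real.exp (-β₀ * N)) ^ (m + 1)
              + C * Real.exp (-α * N) := by rw [hexp]; ring
        nlinarith [hb, htr, hPpos, hPE,
          mul_le_mul_of_nonneg_right hCr hPpos.le]
      · have hb := hDb N (hN₀' N hN) lstar (mem_ball_self hδ)
        rw [sub_self, zero_pow hk0, mul_zero, sub_zero, norm_zero,
          zero_pow (Nat.succ_ne_zero (m + 1)), zero_add] at hb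
        nlinarith [hb, hPE, mul_pos hcn hPpos]
    have hzero' : ∀ N : ℕ, ∃ ρ : ℂ, N₁ ≤ N →
        ρ ∈ Metric.closedBall lstar (C₀ * Real.exp (-β₀ * N)) ∧ D N ρ = 0 := by
      intro N
      by_cases hN : N₁ ≤ N
      · obtain ⟨ρ, h1, h2⟩ := hzero N hN; exact ⟨ρ, fun _ => ⟨h1, h2⟩⟩
      · exact ⟨lstar, fun h => absurd h hN⟩
    choose ρ1 hρ1 using hzero'
    set D₁ : ℕ → ℂ → ℂ := fun N => dslope (D N) (ρ1 N) with hD₁_def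
    have hρ1n : ∀ N, N₁ ≤ N → ‖ρ1 N - lstar‖ ≤ C₀ * Real.exp (-β₀ * N) := by
      intro N hN
      rw [← dist_eq_norm]; exact mem_closedBall.1 (hρ1 N hN).1
    have hρ1b : ∀ N, N₁ ≤ N → ρ1 N ∈ Metric.ball lstar δ := by
      intro N hN
      have h1 := hρ1n N hN
      have h2 : C₀ * Real.exp (-β₀ * N) < δ / 2 := hMa N (hNa N hN)
      rw [mem_ball, dist_eq_norm]; linarith
    have hfact : ∀ N, N₁ ≤ N → ∀ l : ℂ, D N l = (l - ρ1 N) * D₁ N l := by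
      intro N hN l
      have h := sub_smul_dslope (D N) (ρ1 N) l
      rw [(hρ1 N hN).2, sub_zero] at h
      rw [hD₁_def]
      simpa [smul_eq_mul] using h.symm
    have hD₁a : ∀ N, N₁ ≤ N → ∀ l ∈ Metric.ball lstar δ, AnalyticAt ℂ (D₁ N) l := by
      intro N hN l hl
      have hdo : DifferentiableOn ℂ (D₁ N) (Metric.ball lstar δ) := by
        rw [hD₁_def]
        rw [Complex.differentiableOn_dslope (isOpen_ball.mem_nhds (hρ1b N hN))]
        exact fun w hw => ((hDa N (hN₀' N hN) w hw).differentiableAt).differentiableWithinAt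
      exact hdo.analyticAt (isOpen_ball.mem_nhds hl)
    have hkey : ∀ N, N₁ ≤ N → ∀ z ∈ Metric.ball lstar δ,
        ‖D₁ N z - c * (z - lstar) ^ m‖ * ‖z - ρ1 N‖ ≤
          C * (‖z - lstar‖ ^ (m + 1 + 1) + Real.exp (-α * N))
            + ‖c‖ * ‖z - lstar‖ ^ m * (C₀ * Real.exp (-β₀ * N)) := by
      intro N hN z hz
      have hf := hfact N hN z
      have h1 : (z - ρ1 N) * (D₁ N z - c * (z - lstar) ^ m)
          = (D N z - c * (z - lstar) ^ (m + 1))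
            - c * (z - lstar) ^ m * (lstar - ρ1 N) := by
        rw [hf]; ring
      have hb := hDb N (hN₀' N hN) z hz
      have h2 : ‖c * (z - lstar) ^ m * (lstar - ρ1 N)‖
          = ‖c‖ * ‖z - lstar‖ ^ m * ‖lstar - ρ1 N‖ := by
        rw [norm_mul, norm_mul, norm_pow]
      have h3 : ‖lstar - ρ1 N‖ ≤ C₀ * Real.exp (-β₀ * N) := by
        rw [norm_sub_rev]; exact hρ1n N hN
      have h4 : (0:ℝ) ≤ ‖c‖ * ‖z - lstar‖ ^ m := by positivity
      calc ‖D₁ N z - c * (z - lstar) ^ m‖ * ‖z - ρ1 N‖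
          = ‖(z - ρ1 N) * (D₁ N z - c * (z - lstar) ^ m)‖ := by rw [norm_mul]; ring
        _ = ‖(D N z - c * (z - lstar) ^ (m + 1))
            - c * (z - lstar) ^ m * (lstar - ρ1 N)‖ := by rw [h1]
        _ ≤ ‖D N z - c * (z - lstar) ^ (m + 1)‖
            + ‖c * (z - lstar) ^ m * (lstar - ρ1 N)‖ := norm_sub_le _ _
        _ ≤ _ := by
            rw [h2]
            nlinarith [mul_le_mul_of_nonneg_left h3 h4, hb]
    set Mδ : ℝ := max 1 δ with hMδ_def
    have hMδ1 : (1:ℝ) ≤ Mδ := le_max_left _ _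
    have hMδδ : δ ≤ Mδ := le_max_right _ _
    set C₁ : ℝ := 4 * C + 2 * ‖c‖ * Mδ ^ m * C₀ with hC₁_def
    have hC₁ : 0 < C₁ := by rw [hC₁_def]; positivity
    have hexp2 : ∀ N : ℕ, Real.exp (-β₀ * N) = Real.exp (-α₁ * N) * Real.exp (-α₁ * N) := by
      intro N
      rw [← Real.exp_add]; congr 1; rw [hα₁_def]; ring
    have hquot : ∀ N, N₁ ≤ N → ∀ z ∈ Metric.ball lstar δ, Real.exp (-α₁ * N) ≤ ‖z - lstar‖ →
        ‖D₁ N z - c * (z - lstar) ^ m‖ ≤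
          2 * C * ‖z - lstar‖ ^ (m + 1)
            + (2 * C + 2 * ‖c‖ * Mδ ^ m * C₀) * Real.exp (-α₁ * N) := by
      intro N hN z hz hts
      have hspos : 0 < Real.exp (-α₁ * (N:ℝ)) := Real.exp_pos _
      have htpos : 0 < ‖z - lstar‖ := lt_of_lt_of_le hspos hts
      have hrs : C₀ * Real.exp (-β₀ * N) ≤ Real.exp (-α₁ * N) / 2 := by
        have h1 : C₀ * Real.exp (-α₁ * N) < 1 / 2 := hMc N (hNc N hN)
        have h2 : C₀ * Real.exp (-β₀ * N)
            = (C₀ * Real.exp (-α₁ * N)) * Real.exp (-α₁ * N) := by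
          rw [hexp2 N]; ring
        rw [h2]; nlinarith [hspos]
      have hd2 : ‖z - lstar‖ / 2 ≤ ‖z - ρ1 N‖ := by
        have h1 := hρ1n N hN
        have h3 := norm_sub_norm_le (z - lstar) (ρ1 N - lstar)
        have h4 : (z - lstar) - (ρ1 N - lstar) = z - ρ1 N := by ring
        rw [h4] at h3
        linarith
      have hX := hkey N hN z hz
      have htδ : ‖z - lstar‖ < δ := by rw [← dist_eq_norm]; exact mem_ball.1 hz
      have hE2 : Real.exp (-α * (N:ℝ)) ≤ Real.exp (-α₁ * N) * Real.exp (-α₁ * N) := by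
        rw [← hexp2 N]
        apply Real.exp_le_exp.2
        have hβα : β₀ ≤ α := by
          rw [hβ₀_def]
          rw [div_le_iff₀ (by positivity : (0:ℝ) < (↑(m + 1 : ℕ) : ℝ))]
          nlinarith [hα.le, (by exact_mod_cast Nat.one_le_iff_ne_zero.2 hk0 : (1:ℝ) ≤ (↑(m + 1 : ℕ) : ℝ))]
        nlinarith [(Nat.cast_nonneg N : (0:ℝ) ≤ (N:ℝ)), hβα]
      have htm : ‖z - lstar‖ ^ m ≤ Mδ ^ m := pow_le_pow_left₀ htpos.le (by linarith) m
      have hrle : C₀ * Real.exp (-β₀ * N) ≤ C₀ * Real.exp (-α₁ * N) * ‖z - lstar‖ := by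
        rw [hexp2 N, ← mul_assoc]
        exact mul_le_mul_of_nonneg_left hts (by positivity)
      have hnum : C * (‖z - lstar‖ ^ (m + 1 + 1) + Real.exp (-α * N))
            + ‖c‖ * ‖z - lstar‖ ^ m * (C₀ * Real.exp (-β₀ * N))
          ≤ (2 * C * ‖z - lstar‖ ^ (m + 1)
            + (2 * C + 2 * ‖c‖ * Mδ ^ m * C₀) * Real.exp (-α₁ * N)) * (‖z - lstar‖ / 2) := by
        have hp1 : ‖z - lstar‖ ^ m * (C₀ * Real.exp (-β₀ * N))
            ≤ Mδ ^ m * (C₀ * Real.exp (-α₁ * N) * ‖z - lstar‖) :=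
          mul_le_mul htm hrle (by positivity) (by positivity)
        have hp2 : ‖z - lstar‖ ^ (m + 1 + 1) = ‖z - lstar‖ ^ (m + 1) * ‖z - lstar‖ := by
          rw [pow_succ]
        nlinarith [mul_le_mul_of_nonneg_left hp1 hcn.le,
          mul_le_mul_of_nonneg_left hE2 hC.le,
          mul_le_mul_of_nonneg_left hts
            (by positivity : (0:ℝ) ≤ C * Real.exp (-α₁ * (N:ℝ))),
          hp2, hspos.le, htpos.le, hC.le, hcn.le]
      nlinarith [hX, hd2, hnum, norm_nonneg (D₁ N z - c * (z - lstar) ^ m), htpos,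
        mul_le_mul_of_nonneg_left hd2 (norm_nonneg (D₁ N z - c * (z - lstar) ^ m))]
    have hD₁b : ∀ N, N₁ ≤ N → ∀ l ∈ Metric.ball lstar δ,
        ‖D₁ N l - c * (l - lstar) ^ m‖ ≤ C₁ * (‖l - lstar‖ ^ (m + 1) + Real.exp (-α₁ * N)) := by
      intro N hN l hl
      have hspos : 0 < Real.exp (-α₁ * (N:ℝ)) := Real.exp_pos _
      have hs1 : Real.exp (-α₁ * (N:ℝ)) ≤ 1 := by
        apply Real.exp_le_one_iff.2
        have : (0:ℝ) ≤ α₁ * N := by positivity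
        linarith
      have hsδ : Real.exp (-α₁ * (N:ℝ)) < δ / 2 := by
        have := hMd N (hNd N hN); linarith [this]
      have h0 : (0:ℝ) ≤ ‖l - lstar‖ ^ (m + 1) := by positivity
      have hq0 : (0:ℝ) ≤ ‖c‖ * Mδ ^ m * C₀ := by positivity
      rcases le_or_gt ‖l - lstar‖ (Real.exp (-α₁ * (N:ℝ))) with hts | hts
      · have hsub : Metric.closedBall lstar (Real.exp (-α₁ * (N:ℝ))) ⊆ Metric.ball lstar δ :=
          closedBall_subset_ball (by linarith)
        have hg : ∀ z ∈ Metric.closedBall lstar (Real.exp (-α₁ * (N:ℝ))),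
            AnalyticAt ℂ (fun w => D₁ N w - c * (w - lstar) ^ m) z := by
          intro z hz
          exact (hD₁a N hN z (hsub hz)).sub
            (analyticAt_const.mul ((analyticAt_id.sub analyticAt_const).pow m))
        have hsph : ∀ z ∈ Metric.sphere lstar (Real.exp (-α₁ * (N:ℝ))),
            ‖D₁ N z - c * (z - lstar) ^ m‖ ≤ C₁ * Real.exp (-α₁ * N) := by
          intro z hz
          have hzn : ‖z - lstar‖ = Real.exp (-α₁ * (N:ℝ)) := by
            rw [← dist_eq_norm]; exact mem_sphere.1 hz
          have hq := hquot N hN z (hsub (sphere_subset_closedBall hz)) (le_of_eq hzn.symm)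
          rw [hzn] at hq
          have hpow : Real.exp (-α₁ * (N:ℝ)) ^ (m + 1) ≤ Real.exp (-α₁ * (N:ℝ)) := by
            calc Real.exp (-α₁ * (N:ℝ)) ^ (m + 1)
                ≤ Real.exp (-α₁ * (N:ℝ)) ^ 1 :=
                  pow_le_pow_of_le_one hspos.le hs1 (by omega)
              _ = Real.exp (-α₁ * (N:ℝ)) := pow_one _
          rw [hC₁_def]
          nlinarith [hq, hC.le, hspos]
        have hmm := max_modulus_ball hspos hg hsph l
          (by rw [mem_closedBall, dist_eq_norm]; exact hts)
        refine le_trans hmm ?_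
        nlinarith [hC₁, hspos]
      · have hq := hquot N hN l hl hts.le
        rw [hC₁_def]
        nlinarith [hq, hC.le, hspos.le]
    obtain ⟨δ', hδ'pos, hδ'le, N', hN'ge, β', hβ'pos, C'', hC''pos, H⟩ :=
      ih lstar δ hδ c hc C₁ α₁ hC₁ hα₁ N₁ D₁ hD₁a hD₁b
    set β : ℝ := min β' β₀ with hβ_def
    have hβpos : 0 < β := lt_min hβ'pos hβ₀
    set C' : ℝ := C'' + C₀ with hC'_def
    have hC'pos : 0 < C' := by rw [hC'_def]; positivity
    obtain ⟨M₃, hM₃⟩ := exp_decay_lt hC'pos hβpos hδ'pos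
    refine ⟨δ', hδ'pos, hδ'le, max N' M₃,
      le_trans hN₀N₁ (le_trans hN'ge (le_max_left _ _)), β, hβpos, C', hC'pos, fun N hN => ?_⟩
    have hNN' : N' ≤ N := le_trans (le_max_left _ _) hN
    have hNM₃ : M₃ ≤ N := le_trans (le_max_right _ _) hN
    have hNN₁ : N₁ ≤ N := le_trans hN'ge hNN'
    obtain ⟨-, ρ', hρ'bd, h, h_an, h_ne, h_fact⟩ := H N hNN'
    have hmono : ∀ b : ℝ, β ≤ b → Real.exp (-b * N) ≤ Real.exp (-β * N) := by
      intro b hb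
      apply Real.exp_le_exp.2
      nlinarith [mul_nonneg (sub_nonneg.2 hb) (Nat.cast_nonneg N : (0:ℝ) ≤ (N:ℝ))]
    refine ⟨hM₃ N hNM₃, Fin.cons (ρ1 N) ρ', ?_, h, h_an, h_ne, ?_⟩
    · intro i
      refine Fin.cases ?_ ?_ i
      · rw [Fin.cons_zero]
        calc ‖ρ1 N - lstar‖ ≤ C₀ * Real.exp (-β₀ * N) := hρ1n N hNN₁
          _ ≤ C' * Real.exp (-β * N) := by
              have h1 := hmono β₀ (min_le_right β' β₀)
              rw [hC'_def]
              nlinarith [Real.exp_pos (-β * (N:ℝ)), hC''pos.le, hC₀pos.le]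
      · intro j
        rw [Fin.cons_succ]
        calc ‖ρ' j - lstar‖ ≤ C'' * Real.exp (-β' * N) := hρ'bd j
          _ ≤ C' * Real.exp (-β * N) := by
              have h1 := hmono β' (min_le_left β' β₀)
              rw [hC'_def]
              nlinarith [Real.exp_pos (-β * (N:ℝ)), hC''pos.le, hC₀pos.le]
    · intro l
      rw [hfact N hNN₁ l, h_fact l, Fin.prod_univ_succ]
      simp only [Fin.cons_zero, Fin.cons_succ]
      ring

/-- Rouché-type root counting: if `D_N` are analytic on `B_δ(λ*)` with
`|D_N(λ) − c(λ − λ*)^m| ≤ C(|λ − λ*|^{m+1} + e^{−αN})`, then there are `δ* ∈ (0,δ)`,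
`N* ≥ 1`, `β > 0`, `C′ > 0` such that for `N ≥ N*` the function `D_N` has exactly `m`
zeros (with multiplicity) in `B_{δ*}(λ*)`, all within `C′e^{−βN}` of `λ*`. -/
theorem rouche_root_counting
    (lstar : ℂ) (δ : ℝ) (hδ : 0 < δ) (m : ℕ) (c : ℂ) (hc : c ≠ 0)
    (C α : ℝ) (hC : 0 < C) (hα : 0 < α)
    (D : ℕ → ℂ → ℂ)
    (hD_analytic : ∀ N : ℕ, 1 ≤ N → ∀ l ∈ Metric.ball lstar δ, AnalyticAt ℂ (D N) l)
    (hD_bound : ∀ N : ℕ, 1 ≤ N → ∀ l ∈ Metric.ball lstar δ,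
      ‖D N l - c * (l - lstar) ^ m‖ ≤
        C * (‖l - lstar‖ ^ (m + 1) + Real.exp (-α * N))) :
    ∃ δstar : ℝ, 0 < δstar ∧ δstar < δ ∧
      ∃ Nstar : ℕ, 1 ≤ Nstar ∧ ∃ β > (0 : ℝ), ∃ C' > (0 : ℝ),
        ∀ N : ℕ, Nstar ≤ N →
          -- exactly m zeros, counted with multiplicity, in B_{δ*}(λ*)
          (∃ ρ : Fin m → ℂ,
            (∀ i, ρ i ∈ Metric.ball lstar δstar ∧
              ‖ρ i - lstar‖ ≤ C' * Real.exp (-β * N)) ∧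
            ∃ h : ℂ → ℂ, ∀ l ∈ Metric.ball lstar δstar,
              AnalyticAt ℂ h l ∧ h l ≠ 0 ∧ D N l = (∏ i, (l - ρ i)) * h l) ∧
          -- every zero of D_N in B_{δ*}(λ*) is within C′e^{−βN} of λ*
          (∀ l ∈ Metric.ball lstar δstar, D N l = 0 →
            ‖l - lstar‖ ≤ C' * Real.exp (-β * N)):= by
  have hδ2 : 0 < δ / 2 := half_pos hδ
  have hsub : Metric.ball lstar (δ / 2) ⊆ Metric.ball lstar δ := ball_subset_ball (by linarith)
  obtain ⟨δstar, hpos, hle, Nstar, hNstar1, β, hβ, C', hC', H⟩ :=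
    key_lemma m lstar (δ / 2) hδ2 c hc C α hC hα 1 D
      (fun N hN l hl => hD_analytic N hN l (hsub hl))
      (fun N hN l hl => hD_bound N hN l (hsub hl))
  refine ⟨δstar, hpos, lt_of_le_of_lt hle (by linarith), Nstar, hNstar1, β, hβ, C', hC',
    fun N hN => ?_⟩
  obtain ⟨hlt, ρ, hρbd, h, h_an, h_ne, h_fact⟩ := H N hN
  have hss : Metric.ball lstar δstar ⊆ Metric.ball lstar (δ / 2) := ball_subset_ball hle
  constructor
  · refine ⟨ρ, fun i => ⟨?_, hρbd i⟩, h, fun l hl => ⟨h_an l (hss hl), h_ne l hl, h_fact l⟩⟩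
    rw [mem_ball, dist_eq_norm]
    exact lt_of_le_of_lt (hρbd i) hlt
  · intro l hl hzero
    have hf := h_fact l
    rw [hzero] at hf
    have hprod : (∏ i, (l - ρ i)) = 0 := by
      rcases mul_eq_zero.1 hf.symm with h1 | h1
      · exact h1
      · exact absurd h1 (h_ne l hl)
    obtain ⟨i, -, hi⟩ := Finset.prod_eq_zero_iff.1 hprod
    have hlρ : l = ρ i := sub_eq_zero.1 hi
    rw [hlρ]
    exact hρbd i
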